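/- For any m ≥ 3 candidates at arbitrary distinct locations in a Euclidean space and any number n of voters, the Pair-Independent mechanism is a strategy-proof randomized two-winner scv mechanism. -/

import Mathlib

open Finset

/-- Cost of a point `z` when the pair of candidates `(y k, y l)` is elected:
the distance to the closer of the two winners. -/
noncomputable def pairCost {α : Type*} [PseudoMetricSpace α] {m : ℕ}
    (y : Fin m → α) (k l : Fin m) (z : α) : ℝ :=
  min (dist z (y k)) (dist z (y l))

/-- Social cost of the pair `(y k, y l)` on the location profile `x`. -/
noncomputable def socialCost {α : Type*} [PseudoMetricSpace α] {m n : ℕ}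
    (y : Fin m → α) (k l : Fin m) (x : Fin n → α) : ℝ :=
  ∑ i, pairCost y k l (x i)

/-- Optimal social cost over all pairs of distinct candidates. -/
noncomputable def OPT {α : Type*} [PseudoMetricSpace α] {m n : ℕ}
    (y : Fin m → α) (x : Fin n → α) : ℝ :=
  sInf {c : ℝ | ∃ k l : Fin m, k ≠ l ∧ c = socialCost y k l x}

/-- A location profile `x` is consistent with an action profile `a` if every
voter votes for (one of) her nearest candidate(s). -/
def Consistent {α : Type*} [PseudoMetricSpace α] {m n : ℕ}
    (y : Fin m → α) (a : Fin n → Fin m) (x : Fin n → α) : Prop :=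
  ∀ (i : Fin n) (k : Fin m), dist (x i) (y (a i)) ≤ dist (x i) (y k)

/-- `f` is a randomized two-winner mechanism: on every action profile it gives a
probability distribution over unordered pairs of distinct candidates
(represented by a symmetric nonnegative function vanishing on the diagonal whose
values over the pairs `k < l` sum to one). -/
def IsRandMech {m n : ℕ} (f : (Fin n → Fin m) → Fin m → Fin m → ℝ) : Prop :=
  ∀ a : Fin n → Fin m, (∀ k l, 0 ≤ f a k l) ∧ (∀ k l, f a k l = f a l k) ∧
    (∀ k, f a k k = 0) ∧
    ∑ p ∈ univ.filter (fun p : Fin m × Fin m => p.1 < p.2), f a p.1 p.2 = 1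

/-- Expected cost of the point `z` under the lottery `f a`. -/
noncomputable def expCost {α : Type*} [PseudoMetricSpace α] {m n : ℕ}
    (y : Fin m → α) (f : (Fin n → Fin m) → Fin m → Fin m → ℝ)
    (a : Fin n → Fin m) (z : α) : ℝ :=
  ∑ p ∈ univ.filter (fun p : Fin m × Fin m => p.1 < p.2),
    f a p.1 p.2 * pairCost y p.1 p.2 z

/-- Expected social cost of the randomized mechanism `f` on action profile `a`
and location profile `x`. -/
noncomputable def expSC {α : Type*} [PseudoMetricSpace α] {m n : ℕ}
    (y : Fin m → α) (f : (Fin n → Fin m) → Fin m → Fin m → ℝ)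
    (a : Fin n → Fin m) (x : Fin n → α) : ℝ :=
  ∑ p ∈ univ.filter (fun p : Fin m × Fin m => p.1 < p.2),
    f a p.1 p.2 * socialCost y p.1 p.2 x

/-- Strategy-proofness of a randomized two-winner mechanism: voting for a
nearest candidate always minimizes a voter's expected cost, whatever the
other voters do. -/
def RandSP {α : Type*} [PseudoMetricSpace α] {m n : ℕ}
    (y : Fin m → α) (f : (Fin n → Fin m) → Fin m → Fin m → ℝ) : Prop :=
  ∀ (i : Fin n) (xi : α) (a : Fin n → Fin m) (astar ai' : Fin m),
    (∀ k, dist xi (y astar) ≤ dist xi (y k)) →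
    expCost y f (Function.update a i astar) xi ≤
      expCost y f (Function.update a i ai') xi

/-- Number of votes received by candidate `k` under action profile `a`. -/
def votes {m n : ℕ} (a : Fin n → Fin m) (k : Fin m) : ℕ :=
  (univ.filter fun i => a i = k).card

/-- The Pair-Independent mechanism: if some candidate receives all `n` votes,
every pair containing that candidate is elected with probability `1/(m-1)`;
otherwise the pair `(k, l)` is elected with probability
`n_k/(n - n_l) + n_l/(n - n_k) - (n_k + n_l)/n`. -/
noncomputable def pairIndep (n m : ℕ) (a : Fin n → Fin m) (k l : Fin m) : ℝ :=
  if k = l then 0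
  else if votes a k = n ∨ votes a l = n then 1 / ((m : ℝ) - 1)
  else (votes a k : ℝ) / ((n : ℝ) - (votes a l : ℝ)) +
    (votes a l : ℝ) / ((n : ℝ) - (votes a k : ℝ)) -
    ((votes a k : ℝ) + (votes a l : ℝ)) / (n : ℝ)

open Finset in
section
variable {α : Type*} [PseudoMetricSpace α] {m n : ℕ}

lemma sum_votes (a : Fin n → Fin m) : ∑ k, votes a k = n := by
  classical
  have := Finset.card_eq_sum_card_fiberwise
    (s := (univ : Finset (Fin n))) (t := (univ : Finset (Fin m))) (f := a)
    (fun x _ => mem_univ _)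
  simpa [votes, Finset.card_univ] using this.symm

lemma votes_le (a : Fin n → Fin m) (k : Fin m) : votes a k ≤ n := by
  have := Finset.card_filter_le (univ : Finset (Fin n)) (fun i => a i = k)
  simpa [votes, Finset.card_univ] using this

lemma votes_update (a : Fin n → Fin m) (i : Fin n) (k l : Fin m) :
    votes (Function.update a i k) l
      = (∑ j ∈ univ.erase i, if a j = l then 1 else 0) + (if k = l then 1 else 0) := by
  classical
  rw [votes, Finset.card_filter, ← Finset.sum_erase_add _ _ (mem_univ i)]
  congr 1
  · exact Finset.sum_congr rfl fun j hj => by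
      rw [Function.update_of_ne (Finset.ne_of_mem_erase hj)]
  · simp

lemma sum_ite_ne {β : Type*} [AddCommMonoid β] {m : ℕ} (c : Fin m) (w : Fin m → β) :
    ∑ k, (if k = c then 0 else w k) = ∑ k ∈ univ.erase c, w k := by
  rw [← Finset.sum_erase_add _ _ (mem_univ c), if_pos rfl, add_zero]
  exact Finset.sum_congr rfl fun k hk => if_neg (Finset.ne_of_mem_erase hk)

lemma half_sum {m : ℕ} (g : Fin m → Fin m → ℝ) (hsym : ∀ k l, g k l = g l k)
    (hdiag : ∀ k, g k k = 0) :
    ∑ p ∈ univ.filter (fun p : Fin m × Fin m => p.1 < p.2), g p.1 p.2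
      = (1/2) * ∑ k, ∑ l, g k l := by
  classical
  have h1 : ∑ p ∈ univ.filter (fun p : Fin m × Fin m => p.2 < p.1), g p.1 p.2
      = ∑ p ∈ univ.filter (fun p : Fin m × Fin m => p.1 < p.2), g p.1 p.2 := by
    refine Finset.sum_equiv (Equiv.prodComm (Fin m) (Fin m)) ?_ ?_
    · intro p; simp
    · intro p _; exact hsym p.1 p.2
  have h2 : ∑ k, ∑ l, g k l = ∑ p : Fin m × Fin m, g p.1 p.2 := by
    exact (Fintype.sum_prod_type (f := fun p : Fin m × Fin m => g p.1 p.2)).symm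
  rw [h2, ← Finset.sum_filter_add_sum_filter_not univ
    (fun p : Fin m × Fin m => p.1 < p.2) (fun p => g p.1 p.2)]
  have h3 : ∑ p ∈ univ.filter (fun p : Fin m × Fin m => ¬ p.1 < p.2), g p.1 p.2
      = ∑ p ∈ univ.filter (fun p : Fin m × Fin m => p.2 < p.1), g p.1 p.2 := by
    rw [← Finset.sum_filter_add_sum_filter_not (univ.filter (fun p : Fin m × Fin m => ¬ p.1 < p.2))
      (fun p : Fin m × Fin m => p.2 < p.1) (fun p => g p.1 p.2)]
    have hz : ∑ p ∈ (univ.filter (fun p : Fin m × Fin m => ¬ p.1 < p.2)).filter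
        (fun p : Fin m × Fin m => ¬ p.2 < p.1), g p.1 p.2 = 0 := by
      refine Finset.sum_eq_zero fun p hp => ?_
      simp only [Finset.mem_filter] at hp
      have : p.1 = p.2 := le_antisymm (not_lt.1 hp.2) (not_lt.1 hp.1.2)
      calc g p.1 p.2 = g p.2 p.2 := by rw [this]
      _ = 0 := hdiag p.2
    have he : (univ.filter (fun p : Fin m × Fin m => ¬ p.1 < p.2)).filter
        (fun p : Fin m × Fin m => p.2 < p.1)
        = univ.filter (fun p : Fin m × Fin m => p.2 < p.1) := by
      rw [Finset.filter_filter]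
      refine Finset.filter_congr fun p _ => ?_
      constructor
      · exact fun h => h.2
      · exact fun h => ⟨asymm h, h⟩
    rw [hz, add_zero, he]
  rw [h3, h1]
  ring
end
open Finset in
section
variable {α : Type*} [PseudoMetricSpace α] {m n : ℕ}

lemma pairCost_symm (y : Fin m → α) (k l : Fin m) (z : α) :
    pairCost y k l z = pairCost y l k z := min_comm _ _

lemma pairIndep_symm (a : Fin n → Fin m) (k l : Fin m) :
    pairIndep n m a k l = pairIndep n m a l k := by
  unfold pairIndep
  rcases eq_or_ne k l with h | h
  · simp [h]
  · rw [if_neg h, if_neg h.symm]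
    by_cases h2 : votes a k = n ∨ votes a l = n
    · rw [if_pos h2, if_pos (h2.symm)]
    · rw [if_neg h2, if_neg (fun h3 => h2 h3.symm)]
      ring

lemma pairIndep_diag (a : Fin n → Fin m) (k : Fin m) : pairIndep n m a k k = 0 := by
  simp [pairIndep]

noncomputable def condC {α : Type*} [PseudoMetricSpace α] {m n : ℕ}
    (y : Fin m → α) (a : Fin n → Fin m) (xi : α) (k : Fin m) : ℝ :=
  if votes a k = n then (∑ l, if l = k then 0 else pairCost y k l xi) / ((m : ℝ) - 1)
  else ∑ l, if l = k then 0 else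
    ((votes a l : ℝ) / ((n : ℝ) - (votes a k : ℝ))) * pairCost y k l xi

lemma expCost_eq (hn : 1 ≤ n) (y : Fin m → α) (a : Fin n → Fin m) (xi : α) :
    expCost y (pairIndep n m) a xi = (1/(n:ℝ)) * ∑ k, (votes a k : ℝ) * condC y a xi k := by
  classical
  have hn0 : (0:ℝ) < (n:ℝ) := by exact_mod_cast hn
  rw [expCost, half_sum (fun k l => pairIndep n m a k l * pairCost y k l xi)
    (fun k l => by rw [pairIndep_symm, pairCost_symm])
    (fun k => by rw [pairIndep_diag, zero_mul])]
  by_cases hU : ∃ c, votes a c = n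
  · obtain ⟨c, hc⟩ := hU
    have hz : ∀ l, l ≠ c → votes a l = 0 := by
      intro l hl
      have h1 : ∑ k ∈ univ.erase c, votes a k + votes a c = ∑ k, votes a k :=
        Finset.sum_erase_add _ _ (mem_univ c)
      rw [sum_votes, hc] at h1
      have h2 : ∑ k ∈ univ.erase c, votes a k = 0 := by omega
      exact (Finset.sum_eq_zero_iff.1 h2) l (Finset.mem_erase.2 ⟨hl, mem_univ l⟩)
    have hrow : ∀ k, k ≠ c → ∑ l, pairIndep n m a k l * pairCost y k l xi
        = (1/((m:ℝ)-1)) * pairCost y k c xi := by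
      intro k hk
      refine Finset.sum_eq_single c ?_ (by simp) |>.trans ?_
      · intro l _ hl
        rcases eq_or_ne k l with rfl | hkl
        · rw [pairIndep_diag, zero_mul]
        · rw [pairIndep, if_neg hkl, if_neg (by rw [hz k hk, hz l hl]; omega),
            hz k hk, hz l hl]
          push_cast
          ring_nf
      · rw [pairIndep, if_neg hk, if_pos (Or.inr hc)]
    have hcrow : ∑ l, pairIndep n m a c l * pairCost y c l xi
        = ∑ l, (if l = c then 0 else (1/((m:ℝ)-1)) * pairCost y c l xi) := by
      refine Finset.sum_congr rfl fun l _ => ?_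
      rcases eq_or_ne l c with rfl | hl
      · rw [pairIndep_diag, zero_mul, if_pos rfl]
      · rw [if_neg hl, pairIndep, if_neg (Ne.symm hl), if_pos (Or.inl hc)]
    have houter : ∑ k, ∑ l, pairIndep n m a k l * pairCost y k l xi
        = 2 * ∑ l, (if l = c then 0 else (1/((m:ℝ)-1)) * pairCost y c l xi) := by
      rw [← Finset.sum_erase_add _ _ (mem_univ c), hcrow]
      have : ∑ k ∈ univ.erase c, ∑ l, pairIndep n m a k l * pairCost y k l xi
          = ∑ k ∈ univ.erase c, (1/((m:ℝ)-1)) * pairCost y c k xi := by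
        refine Finset.sum_congr rfl fun k hk => ?_
        rw [hrow k (Finset.ne_of_mem_erase hk), pairCost_symm]
      rw [this, ← sum_ite_ne c (fun k => (1/((m:ℝ)-1)) * pairCost y c k xi)]
      ring
    have hR : ∑ k, (votes a k : ℝ) * condC y a xi k = (n:ℝ) * condC y a xi c := by
      refine Finset.sum_eq_single c ?_ (by simp) |>.trans (by rw [hc])
      intro l _ hl
      rw [hz l hl]
      simp
    rw [houter, hR, condC, if_pos hc]
    have h5 : ∑ l, (if l = c then 0 else (1/((m:ℝ)-1)) * pairCost y c l xi)
        = (∑ l, if l = c then (0:ℝ) else pairCost y c l xi) / ((m:ℝ)-1) := by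
      rw [Finset.sum_div]
      refine Finset.sum_congr rfl fun l _ => ?_
      split_ifs
      · simp
      · ring
    rw [h5]
    field_simp
  · push_neg at hU
    have hlt : ∀ c, (votes a c : ℝ) < n := by
      intro c
      exact_mod_cast lt_of_le_of_ne (votes_le a c) (hU c)
    have hpos : ∀ c, (0:ℝ) < (n:ℝ) - votes a c := fun c => by linarith [hlt c]
    set A : Fin m → Fin m → ℝ := fun k l => if l = k then 0 else
      ((votes a k : ℝ) * (votes a l : ℝ) / ((n:ℝ) * ((n:ℝ) - votes a k))) * pairCost y k l xi
      with hA
    have hg : ∀ k l, pairIndep n m a k l * pairCost y k l xi = A k l + A l k := by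
      intro k l
      rcases eq_or_ne k l with rfl | hkl
      · simp [hA, pairIndep_diag]
      · rw [hA]
        simp only [if_neg hkl, if_neg (Ne.symm hkl)]
        rw [pairIndep, if_neg hkl, if_neg (by push_neg; exact ⟨hU k, hU l⟩),
          pairCost_symm y l k]
        have h1 : (n:ℝ) ≠ 0 := ne_of_gt hn0
        have h2 : (n:ℝ) - votes a k ≠ 0 := ne_of_gt (hpos k)
        have h3 : (n:ℝ) - votes a l ≠ 0 := ne_of_gt (hpos l)
        field_simp
        ring
    have hAA : ∑ k, ∑ l, (A k l + A l k) = 2 * ∑ k, ∑ l, A k l := by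
      rw [Finset.sum_congr rfl (fun k _ => Finset.sum_add_distrib), Finset.sum_add_distrib,
        Finset.sum_comm (f := fun k l => A l k)]
      ring
    have hrhs : ∀ k, (1/(n:ℝ)) * ((votes a k : ℝ) * condC y a xi k) = ∑ l, A k l := by
      intro k
      rw [condC, if_neg (hU k), Finset.mul_sum, Finset.mul_sum]
      refine Finset.sum_congr rfl fun l _ => ?_
      simp only [hA]
      rcases eq_or_ne l k with h | h
      · simp [h]
      · rw [if_neg h, if_neg h]
        have h2 : (n:ℝ) - votes a k ≠ 0 := ne_of_gt (hpos k)
        field_simp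
    have e1 : ∑ k, ∑ l, pairIndep n m a k l * pairCost y k l xi
        = ∑ k, ∑ l, (A k l + A l k) :=
      Finset.sum_congr rfl fun k _ => Finset.sum_congr rfl fun l _ => hg k l
    have e2 : (1/(n:ℝ)) * ∑ k, (votes a k : ℝ) * condC y a xi k = ∑ k, ∑ l, A k l := by
      rw [Finset.mul_sum]
      exact Finset.sum_congr rfl fun k _ => hrhs k
    rw [e1, hAA]
    linarith [e2]
end
open Finset in
section
variable {α : Type*} [PseudoMetricSpace α] {m n : ℕ}

lemma weight_sum (a : Fin n → Fin m) (k : Fin m) :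
    ∑ l ∈ univ.erase k, (votes a l : ℝ) = (n:ℝ) - votes a k := by
  have h1 : ∑ l ∈ univ.erase k, votes a l + votes a k = n := by
    rw [Finset.sum_erase_add _ _ (mem_univ k), sum_votes]
  have h2 := congrArg (Nat.cast : ℕ → ℝ) h1
  push_cast at h2
  linarith

lemma card_erase_real (hm : 1 ≤ m) (k : Fin m) :
    ((univ.erase k).card : ℝ) = (m:ℝ) - 1 := by
  rw [Finset.card_erase_of_mem (mem_univ k), Finset.card_univ, Fintype.card_fin]
  push_cast [Nat.cast_sub hm]
  ring

lemma condC_ge (hm : 2 ≤ m) (hn : 1 ≤ n) (y : Fin m → α) (a : Fin n → Fin m) (xi : α)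
    (astar : Fin m) (hδ : ∀ l, dist xi (y astar) ≤ dist xi (y l)) (k : Fin m) :
    dist xi (y astar) ≤ condC y a xi k := by
  classical
  set δ := dist xi (y astar) with hδdef
  have hM : ∀ k l, δ ≤ pairCost y k l xi := fun k l => le_min (hδ k) (hδ l)
  rw [condC]
  split_ifs with h
  · have hm1 : (0:ℝ) < (m:ℝ) - 1 := by
      have : (2:ℝ) ≤ (m:ℝ) := by exact_mod_cast hm
      linarith
    rw [le_div_iff₀ hm1]
    calc δ * ((m:ℝ) - 1) = ∑ l, (if l = k then (0:ℝ) else δ) := by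
          rw [sum_ite_ne, Finset.sum_const, nsmul_eq_mul, card_erase_real (by omega) k]
          ring
      _ ≤ ∑ l, (if l = k then 0 else pairCost y k l xi) := by
          refine Finset.sum_le_sum fun l _ => ?_
          split_ifs
          · exact le_rfl
          · exact hM k l
  · have hlt : (votes a k : ℝ) < n := by
      exact_mod_cast lt_of_le_of_ne (votes_le a k) h
    have hD : (0:ℝ) < (n:ℝ) - votes a k := by linarith
    have hw : ∑ l, (if l = k then (0:ℝ) else (votes a l : ℝ)/((n:ℝ) - votes a k)) = 1 := by
      rw [sum_ite_ne, ← Finset.sum_div, weight_sum a k, div_self (ne_of_gt hD)]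
    calc δ = (∑ l, (if l = k then (0:ℝ) else (votes a l:ℝ)/((n:ℝ) - votes a k))) * δ := by
          rw [hw, one_mul]
      _ = ∑ l, (if l = k then 0 else ((votes a l:ℝ)/((n:ℝ) - votes a k)) * δ) := by
          rw [Finset.sum_mul]
          exact Finset.sum_congr rfl fun l _ => by split_ifs <;> ring
      _ ≤ ∑ l, (if l = k then 0 else ((votes a l:ℝ)/((n:ℝ) - votes a k)) * pairCost y k l xi) := by
          refine Finset.sum_le_sum fun l _ => ?_
          split_ifs
          · exact le_rfl
          · exact mul_le_mul_of_nonneg_left (hM k l) (div_nonneg (Nat.cast_nonneg _) hD.le)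

lemma condC_astar (hm : 2 ≤ m) (hn : 1 ≤ n) (y : Fin m → α) (a : Fin n → Fin m) (xi : α)
    (astar : Fin m) (hδ : ∀ l, dist xi (y astar) ≤ dist xi (y l)) :
    condC y a xi astar = dist xi (y astar) := by
  classical
  set δ := dist xi (y astar) with hδdef
  have hMa : ∀ l, pairCost y astar l xi = δ := fun l => min_eq_left (hδ l)
  rw [condC]
  split_ifs with h
  · have hm1 : ((m:ℝ) - 1) ≠ 0 := by
      have : (2:ℝ) ≤ (m:ℝ) := by exact_mod_cast hm
      intro h0; linarith
    rw [Finset.sum_congr rfl (fun l (_ : l ∈ univ) => by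
      split_ifs with h2
      · rfl
      · exact hMa l : ∀ l ∈ univ, (if l = astar then (0:ℝ) else pairCost y astar l xi)
          = (if l = astar then 0 else δ))]
    rw [sum_ite_ne, Finset.sum_const, nsmul_eq_mul, card_erase_real (by omega) astar,
      mul_comm, mul_div_assoc, div_self hm1, mul_one]
  · have hlt : (votes a astar : ℝ) < n := by
      exact_mod_cast lt_of_le_of_ne (votes_le a astar) h
    have hD : (0:ℝ) < (n:ℝ) - votes a astar := by linarith
    have hw : ∑ l, (if l = astar then (0:ℝ) else (votes a l : ℝ)/((n:ℝ) - votes a astar)) = 1 := by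
      rw [sum_ite_ne, ← Finset.sum_div, weight_sum a astar, div_self (ne_of_gt hD)]
    calc ∑ l, (if l = astar then (0:ℝ) else ((votes a l:ℝ)/((n:ℝ) - votes a astar)) * pairCost y astar l xi)
        = ∑ l, (if l = astar then (0:ℝ) else ((votes a l:ℝ)/((n:ℝ) - votes a astar)) * δ) := by
          refine Finset.sum_congr rfl fun l _ => ?_
          split_ifs with h2
          · rfl
          · rw [hMa l]
      _ = (∑ l, (if l = astar then (0:ℝ) else (votes a l:ℝ)/((n:ℝ) - votes a astar))) * δ := by
          rw [Finset.sum_mul]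
          exact Finset.sum_congr rfl fun l _ => by split_ifs <;> ring
      _ = δ := by rw [hw, one_mul]
end

/-- For any `m ≥ 3` candidates at distinct locations in a Euclidean space, the
Pair-Independent mechanism is a strategy-proof randomized two-winner scv
mechanism. -/
theorem stmt10 {dim m n : ℕ} (hm : 3 ≤ m)
    (y : Fin m → EuclideanSpace ℝ (Fin dim)) (hy : Function.Injective y) :
    RandSP y (pairIndep n m) := by
  classical
  intro i xi a astar b hδ
  rcases eq_or_ne astar b with rfl | hab
  · exact le_rfl
  have hn : 1 ≤ n := i.pos
  have hm2 : 2 ≤ m := by omega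
  set δ := dist xi (y astar) with hδdef
  have hδ0 : 0 ≤ δ := dist_nonneg
  have hM : ∀ k l, δ ≤ pairCost y k l xi := fun k l => le_min (hδ k) (hδ l)
  set a1 := Function.update a i astar with ha1
  set a2 := Function.update a i b with ha2
  set c : Fin m → ℕ := fun l => ∑ j ∈ univ.erase i, if a j = l then 1 else 0 with hc
  have hv1 : ∀ l, votes a1 l = c l + (if astar = l then 1 else 0) :=
    fun l => votes_update a i astar l
  have hv2 : ∀ l, votes a2 l = c l + (if b = l then 1 else 0) :=
    fun l => votes_update a i b l
  have hcsum : ∑ l, c l = n - 1 := by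
    have h1 : ∑ l, votes a1 l = n := sum_votes a1
    rw [Finset.sum_congr rfl (fun l _ => hv1 l), Finset.sum_add_distrib,
      Finset.sum_ite_eq univ astar (fun _ => 1), if_pos (mem_univ astar)] at h1
    omega
  have hck : ∀ k, c k ≤ n - 1 := fun k =>
    hcsum ▸ Finset.single_le_sum (f := c) (fun l _ => Nat.zero_le _) (mem_univ k)
  have hckn : ∀ k, c k + 1 ≤ n := fun k => by have := hck k; omega
  have hckR : ∀ k, (c k : ℝ) + 1 ≤ (n:ℝ) := fun k => by exact_mod_cast hckn k
  rw [expCost_eq hn y a1 xi, expCost_eq hn y a2 xi]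
  have hninv : (0:ℝ) ≤ 1/(n:ℝ) := by positivity
  refine mul_le_mul_of_nonneg_left ?_ hninv
  have hsplit : ∀ (a' : Fin n → Fin m) (w : Fin m),
      (∀ l, votes a' l = c l + (if w = l then 1 else 0)) →
      ∑ k, (votes a' k : ℝ) * condC y a' xi k
        = (∑ k, (c k : ℝ) * condC y a' xi k) + condC y a' xi w := by
    intro a' w hv
    have h1 : ∀ k, (votes a' k : ℝ) * condC y a' xi k
        = (c k : ℝ) * condC y a' xi k + (if w = k then condC y a' xi k else 0) := by
      intro k
      rw [hv k]
      push_cast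
      split_ifs <;> ring
    rw [Finset.sum_congr rfl (fun k _ => h1 k), Finset.sum_add_distrib,
      Finset.sum_ite_eq univ w (fun k => condC y a' xi k), if_pos (mem_univ w)]
  rw [hsplit a1 astar hv1, hsplit a2 b hv2]
  have key2 : condC y a1 xi astar ≤ condC y a2 xi b := by
    rw [condC_astar hm2 hn y a1 xi astar hδ]
    exact condC_ge hm2 hn y a2 xi astar hδ b
  -- decomposition of condC for a profile with an extra vote at w ≠ k
  have decomp : ∀ (a' : Fin n → Fin m) (w : Fin m) (k : Fin m), w ≠ k →
      (∀ l, votes a' l = c l + (if w = l then 1 else 0)) →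
      condC y a' xi k
        = (∑ l, (if l = k then (0:ℝ) else ((c l:ℝ)/((n:ℝ) - c k)) * pairCost y k l xi))
          + (1/((n:ℝ) - c k)) * pairCost y k w xi := by
    intro a' w k hwk hv
    have hvk : votes a' k = c k := by rw [hv k, if_neg hwk]; omega
    have hne : votes a' k ≠ n := by rw [hvk]; have := hck k; omega
    rw [condC, if_neg hne, hvk]
    have h2 : ∀ l, (if l = k then (0:ℝ) else ((votes a' l:ℝ)/((n:ℝ) - c k)) * pairCost y k l xi)
        = (if l = k then 0 else ((c l:ℝ)/((n:ℝ) - c k)) * pairCost y k l xi)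
          + (if l = w then (1/((n:ℝ) - c k)) * pairCost y k l xi else 0) := by
      intro l
      rcases eq_or_ne l k with rfl | hlk
      · rw [if_pos rfl, if_pos rfl, if_neg (fun h => hwk (h.symm)), add_zero]
      · rw [if_neg hlk, if_neg hlk, hv l]
        rcases eq_or_ne l w with rfl | hlw
        · rw [if_pos rfl, if_pos rfl]
          push_cast
          ring
        · rw [if_neg (fun h => hlw h.symm), if_neg hlw]
          push_cast
          ring
    rw [Finset.sum_congr rfl (fun l _ => h2 l), Finset.sum_add_distrib,
      Finset.sum_ite_eq' univ w (fun l => (1/((n:ℝ) - c k)) * pairCost y k l xi),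
      if_pos (mem_univ w)]
  have hDpos : ∀ k : Fin m, (0:ℝ) < (n:ℝ) - c k := fun k => by
    have := hckR k; linarith
  have key1 : ∀ k, (c k:ℝ) * condC y a1 xi k ≤ (c k:ℝ) * condC y a2 xi k := by
    intro k
    rcases Nat.eq_zero_or_pos (c k) with h0 | hcpos
    · simp [h0]
    refine mul_le_mul_of_nonneg_left ?_ (Nat.cast_nonneg _)
    rcases eq_or_ne k astar with rfl | hka
    · rw [condC_astar hm2 hn y a1 xi k hδ, condC_astar hm2 hn y a2 xi k hδ]
    rcases eq_or_ne k b with rfl | hkb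
    · -- k = b
      have hd1 : condC y a1 xi k
          = (∑ l, (if l = k then (0:ℝ) else ((c l:ℝ)/((n:ℝ) - c k)) * pairCost y k l xi))
            + (1/((n:ℝ) - c k)) * pairCost y k astar xi := decomp a1 astar k hab hv1
      have hMba : pairCost y k astar xi = δ := min_eq_right (hδ k)
      by_cases hvb : votes a2 k = n
      · have hcb : c k = n - 1 := by
          have h3 := hv2 k
          rw [if_pos rfl] at h3
          omega
        have hzero : ∀ l, l ≠ k → c l = 0 := by
          intro l hl
          have h1 : ∑ l' ∈ univ.erase k, c l' + c k = ∑ l', c l' :=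
            Finset.sum_erase_add _ _ (mem_univ k)
          rw [hcsum, hcb] at h1
          have h2 : ∑ l' ∈ univ.erase k, c l' = 0 := by omega
          exact Finset.sum_eq_zero_iff.1 h2 l (Finset.mem_erase.2 ⟨hl, mem_univ l⟩)
        have hB0 : (∑ l, (if l = k then (0:ℝ) else ((c l:ℝ)/((n:ℝ) - c k)) * pairCost y k l xi)) = 0 := by
          refine Finset.sum_eq_zero fun l _ => ?_
          split_ifs with h
          · rfl
          · rw [hzero l h]; simp
        have hD1 : (n:ℝ) - c k = 1 := by
          have h4 : (c k:ℝ) = (n:ℝ) - 1 := by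
            rw [hcb]; push_cast [Nat.cast_sub hn]; ring
          rw [h4]; ring
        rw [hd1, hB0, hD1, hMba]
        simpa using condC_ge hm2 hn y a2 xi astar hδ k
      · have hvb2 : votes a2 k = c k + 1 := by rw [hv2 k, if_pos rfl]
        have hcb2 : c k + 2 ≤ n := by
          have h5 := votes_le a2 k
          omega
        have hcb2R : (c k:ℝ) + 2 ≤ (n:ℝ) := by exact_mod_cast hcb2
        set D2 : ℝ := (n:ℝ) - c k - 1 with hD2
        have hD2pos : (0:ℝ) < D2 := by rw [hD2]; linarith
        set S : ℝ := ∑ l, (if l = k then (0:ℝ) else (c l:ℝ) * pairCost y k l xi) with hS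
        have hd2 : condC y a2 xi k = S / D2 := by
          rw [condC, if_neg hvb, hS, Finset.sum_div]
          refine Finset.sum_congr rfl fun l _ => ?_
          rcases eq_or_ne l k with rfl | hl
          · simp
          · rw [if_neg hl, if_neg hl, hv2 l, if_neg (fun h => hl h.symm), hvb2, hD2]
            push_cast
            ring
        have hd1' : condC y a1 xi k = (S + δ) / ((n:ℝ) - c k) := by
          rw [hd1, hMba, hS, add_div, Finset.sum_div]
          congr 1
          · refine Finset.sum_congr rfl fun l _ => ?_
            split_ifs
            · simp
            · ring
          · ring
        rw [hd1', hd2]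
        have hsum2 : ∑ l ∈ univ.erase k, (c l:ℝ) = (n:ℝ) - 1 - c k := by
          have h1 : ∑ l' ∈ univ.erase k, c l' + c k = ∑ l', c l' :=
            Finset.sum_erase_add _ _ (mem_univ k)
          rw [hcsum] at h1
          have h2 := congrArg (Nat.cast : ℕ → ℝ) h1
          push_cast [Nat.cast_sub hn] at h2
          linarith
        have hSge : D2 * δ ≤ S := by
          calc D2 * δ = ∑ l, (if l = k then (0:ℝ) else (c l:ℝ) * δ) := by
                rw [sum_ite_ne, ← Finset.sum_mul, hsum2, hD2]; ring
            _ ≤ S := by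
                rw [hS]
                refine Finset.sum_le_sum fun l _ => ?_
                split_ifs
                · exact le_rfl
                · exact mul_le_mul_of_nonneg_left (hM k l) (Nat.cast_nonneg _)
        rw [div_le_div_iff₀ (hDpos k) hD2pos]
        have hexp : (n:ℝ) - (c k:ℝ) = D2 + 1 := by rw [hD2]; ring
        rw [hexp]
        nlinarith [hSge]
    · -- k ≠ astar, k ≠ b
      rw [decomp a1 astar k (Ne.symm hka) hv1, decomp a2 b k (Ne.symm hkb) hv2]
      refine add_le_add (le_refl _) ?_
      refine mul_le_mul_of_nonneg_left ?_ (div_nonneg zero_le_one (hDpos k).le)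
      rw [show pairCost y k astar xi = δ from min_eq_right (hδ k)]
      exact hM k b
  exact add_le_add (Finset.sum_le_sum fun k _ => key1 k) key2
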